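/- Under the same setup (each fᵢ with H-Lipschitz Hessian, M ≥ H, f = (1/n)∑fᵢ μ-strongly convex with minimizer x⋆, x⁺ the minimizer of the cubically regularized model), f(x⁺) − f(x⋆) ≤ (√2(M+H)/(3μ^{3/2})) · (1/n)∑ᵢ (f(wᵢ) − f(x⋆))^{3/2}. -/

import Mathlib

open scoped RealInnerProductSpace

noncomputable def iota (d : ℕ) : StrongDual ℝ (EuclideanSpace ℝ (Fin d)) ≃ₗᵢ[ℝ] EuclideanSpace ℝ (Fin d) :=
    (InnerProductSpace.toDual ℝ (EuclideanSpace ℝ (Fin d))).symm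

lemma hess_apply {d : ℕ} (f : EuclideanSpace ℝ (Fin d) → ℝ) (y v v' : EuclideanSpace ℝ (Fin d)) :
    fderiv ℝ (fderiv ℝ f) y v v' = ⟪fderiv ℝ (gradient f) y v, v'⟫ := by
  have h : gradient f = (iota d) ∘ (fderiv ℝ f) := rfl
  rw [h, LinearIsometryEquiv.comp_fderiv]
  simp only [ContinuousLinearMap.coe_comp', Function.comp_apply,
    LinearIsometryEquiv.coe_coe, iota]
  exact (InnerProductSpace.toDual_symm_apply).symm

lemma taylor_cubic {d : ℕ} (f : EuclideanSpace ℝ (Fin d) → ℝ) (H : ℝ) (hH : 0 ≤ H)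
    (hf : ContDiff ℝ 2 f)
    (hLip : ∀ x y : EuclideanSpace ℝ (Fin d),
      ‖fderiv ℝ (gradient f) x - fderiv ℝ (gradient f) y‖ ≤ H * ‖x - y‖)
    (w x : EuclideanSpace ℝ (Fin d)) :
    |f x - (f w + ⟪gradient f w, x - w⟫
      + (1 / 2) * ⟪fderiv ℝ (gradient f) w (x - w), x - w⟫)| ≤ H / 6 * ‖x - w‖ ^ 3 := by
  set u := x - w with hu
  set γ : ℝ → EuclideanSpace ℝ (Fin d) := fun t => w + t • u with hγdef
  have hγ : ∀ t : ℝ, HasDerivAt γ u t := by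
    intro t
    have := ((hasDerivAt_id t).smul_const u).const_add w
    rwa [one_smul] at this
  have hγcont : Continuous γ := continuous_const.add (continuous_id.smul continuous_const)
  set D1 := fderiv ℝ f with hD1
  set D2 := fderiv ℝ D1 with hD2
  have hfdiff : Differentiable ℝ f := hf.differentiable (by norm_num)
  have hD1c : ContDiff ℝ 1 D1 := hf.fderiv_right (le_refl 2)
  have hD1diff : Differentiable ℝ D1 := hD1c.differentiable (by norm_num)
  have hD2cont : Continuous D2 := hD1c.continuous_fderiv (by norm_num)
  have hB : ∀ a b : EuclideanSpace ℝ (Fin d), |D2 a u u - D2 b u u| ≤ H * ‖a - b‖ * ‖u‖ ^ 2 := by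
    intro a b
    have h1 : D2 a u u - D2 b u u
        = ⟪(fderiv ℝ (gradient f) a - fderiv ℝ (gradient f) b) u, u⟫ := by
      rw [hess_apply f a u u, hess_apply f b u u]
      simp [inner_sub_left]
    rw [h1]
    set A := fderiv ℝ (gradient f) a - fderiv ℝ (gradient f) b with hA
    calc |⟪A u, u⟫| ≤ ‖A u‖ * ‖u‖ := abs_real_inner_le_norm _ _
      _ ≤ (‖A‖ * ‖u‖) * ‖u‖ :=
          mul_le_mul_of_nonneg_right (A.le_opNorm u) (norm_nonneg u)
      _ ≤ H * ‖a - b‖ * ‖u‖ ^ 2 := by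
          have h2 := hLip a b
          have h3 : (0:ℝ) ≤ ‖u‖ := norm_nonneg u
          nlinarith [norm_nonneg A]
  set g : ℝ → ℝ := fun t => f (γ t) with hg
  set g1 : ℝ → ℝ := fun t => D1 (γ t) u with hg1
  set g2 : ℝ → ℝ := fun t => D2 (γ t) u u with hg2
  have hgd : ∀ t : ℝ, HasDerivAt g (g1 t) t := by
    intro t
    exact (hfdiff.differentiableAt.hasFDerivAt).comp_hasDerivAt t (hγ t)
  have hg1d : ∀ t : ℝ, HasDerivAt g1 (g2 t) t := by
    intro t
    have h1 : HasDerivAt (fun s => D1 (γ s)) (D2 (γ t) u) t :=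
      (hD1diff.differentiableAt.hasFDerivAt).comp_hasDerivAt t (hγ t)
    have := h1.clm_apply (hasDerivAt_const t u)
    simpa using this
  have hg2cont : Continuous g2 := by
    have h1 : Continuous fun t => D2 (γ t) := hD2cont.comp hγcont
    exact (ContinuousLinearMap.apply ℝ ℝ u).continuous.comp
      ((ContinuousLinearMap.apply ℝ (EuclideanSpace ℝ (Fin d) →L[ℝ] ℝ) u).continuous.comp h1)
  set h : ℝ → ℝ := fun t => g t + (1 - t) * g1 t + (1 - t) ^ 2 / 2 * g2 0 with hh
  have hhd : ∀ t : ℝ, HasDerivAt h ((1 - t) * (g2 t - g2 0)) t := by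
    intro t
    have d1 : HasDerivAt (fun s => (1 - s) * g1 s) ((0 - 1) * g1 t + (1 - t) * g2 t) t :=
      ((hasDerivAt_const t (1:ℝ)).sub (hasDerivAt_id' t)).mul (hg1d t)
    have d2 : HasDerivAt (fun s => (1 - s) ^ 2 / 2 * g2 0)
        ((↑2 * (1 - t) ^ (2 - 1) * (0 - 1) / 2) * g2 0) t :=
      ((((hasDerivAt_const t (1:ℝ)).sub (hasDerivAt_id' t)).pow 2).div_const 2).mul_const (g2 0)
    have := ((hgd t).add d1).add d2
    refine this.congr_deriv ?_
    push_cast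
    ring
  have hcont1 : Continuous fun t : ℝ => (1 - t) * (g2 t - g2 0) :=
    (continuous_const.sub continuous_id).mul (hg2cont.sub continuous_const)
  have hint : ∫ t in (0:ℝ)..1, (1 - t) * (g2 t - g2 0) = h 1 - h 0 :=
    intervalIntegral.integral_eq_sub_of_hasDerivAt (fun t _ => hhd t)
      (hcont1.intervalIntegrable _ _)
  have hval : h 1 - h 0 = f x - (f w + ⟪gradient f w, u⟫
      + (1 / 2) * ⟪fderiv ℝ (gradient f) w u, u⟫) := by
    have e1 : γ 1 = x := by simp [hγdef, hu]
    have e0 : γ 0 = w := by simp [hγdef]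
    have eg1 : g1 0 = ⟪gradient f w, u⟫ := by
      simp only [hg1, e0]
      exact (InnerProductSpace.toDual_symm_apply).symm
    have eg2 : g2 0 = ⟪fderiv ℝ (gradient f) w u, u⟫ := by
      simp only [hg2, e0]
      exact hess_apply f w u u
    have hv : h 1 - h 0 = g 1 - g 0 - g1 0 - g2 0 / 2 := by
      simp only [hh]; ring
    rw [hv, eg1, eg2]
    have hg1' : g 1 = f x := by simp only [hg, e1]
    have hg0' : g 0 = f w := by simp only [hg, e0]
    rw [hg1', hg0']
    ring
  -- final bound
  have hbound : ∀ t ∈ Set.uIoc (0:ℝ) 1,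
      ‖(1 - t) * (g2 t - g2 0)‖ ≤ H * ‖u‖ ^ 3 * (t * (1 - t)) := by
    intro t ht
    rw [Set.uIoc_of_le (by norm_num : (0:ℝ) ≤ 1)] at ht
    obtain ⟨ht0, ht1⟩ := ht
    have h1 : ‖γ t - γ 0‖ = t * ‖u‖ := by
      have : γ t - γ 0 = t • u := by simp [hγdef]
      rw [this, norm_smul, Real.norm_eq_abs, abs_of_pos ht0]
    have h2 := hB (γ t) (γ 0)
    rw [h1] at h2
    rw [Real.norm_eq_abs, abs_mul, abs_of_nonneg (by linarith : (0:ℝ) ≤ 1 - t)]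
    calc (1 - t) * |g2 t - g2 0| ≤ (1 - t) * (H * (t * ‖u‖) * ‖u‖ ^ 2) := by
          apply mul_le_mul_of_nonneg_left _ (by linarith)
          exact h2
      _ = H * ‖u‖ ^ 3 * (t * (1 - t)) := by ring
  have hibound : IntervalIntegrable (fun t => H * ‖u‖ ^ 3 * (t * (1 - t))) MeasureTheory.volume 0 1 := by
    apply Continuous.intervalIntegrable
    exact continuous_const.mul (continuous_id.mul (continuous_const.sub continuous_id))
  have hfinal : ‖∫ t in (0:ℝ)..1, (1 - t) * (g2 t - g2 0)‖
      ≤ |∫ t in (0:ℝ)..1, H * ‖u‖ ^ 3 * (t * (1 - t))| :=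
    (intervalIntegral.norm_integral_le_of_norm_le zero_le_one
      (Filter.Eventually.of_forall fun t ht => hbound t (by rwa [Set.uIoc_of_le zero_le_one]))
      hibound).trans (le_abs_self _)
  have hcomp : ∫ t in (0:ℝ)..1, H * ‖u‖ ^ 3 * (t * (1 - t)) = H * ‖u‖ ^ 3 * (1 / 6) := by
    rw [intervalIntegral.integral_const_mul]
    congr 1
    have : ∀ t : ℝ, t * (1 - t) = t - t ^ 2 := fun t => by ring
    simp_rw [this]
    rw [intervalIntegral.integral_sub
      (Continuous.intervalIntegrable continuous_id' _ _)
      (Continuous.intervalIntegrable (continuous_pow 2) _ _)]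
    rw [integral_id, integral_pow]
    norm_num
  rw [hcomp] at hfinal
  rw [hint, hval, Real.norm_eq_abs] at hfinal
  calc |f x - (f w + ⟪gradient f w, u⟫ + 1 / 2 * ⟪fderiv ℝ (gradient f) w u, u⟫)|
      ≤ |H * ‖u‖ ^ 3 * (1 / 6)| := hfinal
    _ = H / 6 * ‖u‖ ^ 3 := by
        rw [abs_of_nonneg (by positivity)]
        ring


theorem cubic_newton_functional_decrease
    (d n : ℕ) (hn : 0 < n)
    (f : Fin n → EuclideanSpace ℝ (Fin d) → ℝ)
    (μ H M : ℝ) (hμ : 0 < μ) (hH : 0 ≤ H) (hM : H ≤ M)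
    (hf : ∀ i, ContDiff ℝ 2 (f i))
    (hLip : ∀ i, ∀ x y : EuclideanSpace ℝ (Fin d),
      ‖fderiv ℝ (gradient (f i)) x - fderiv ℝ (gradient (f i)) y‖ ≤ H * ‖x - y‖)
    (F : EuclideanSpace ℝ (Fin d) → ℝ)
    (hF : F = fun x => (n : ℝ)⁻¹ * ∑ i, f i x)
    (hsc : ∀ x y : EuclideanSpace ℝ (Fin d),
      F y + ⟪gradient F y, x - y⟫ + μ / 2 * ‖x - y‖ ^ 2 ≤ F x)
    (xstar : EuclideanSpace ℝ (Fin d)) (hmin : ∀ x, F xstar ≤ F x)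
    (w : Fin n → EuclideanSpace ℝ (Fin d))
    (φ : Fin n → EuclideanSpace ℝ (Fin d) → ℝ)
    (hφ : ∀ i x, φ i x = f i (w i) + ⟪gradient (f i) (w i), x - w i⟫
      + (1 / 2) * ⟪fderiv ℝ (gradient (f i)) (w i) (x - w i), x - w i⟫)
    (xplus : EuclideanSpace ℝ (Fin d))
    (hxplus : ∀ y : EuclideanSpace ℝ (Fin d),
      (n : ℝ)⁻¹ * ∑ i, (φ i xplus + M / 6 * ‖xplus - w i‖ ^ 3)
        ≤ (n : ℝ)⁻¹ * ∑ i, (φ i y + M / 6 * ‖y - w i‖ ^ 3)) :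
    F xplus - F xstar
      ≤ Real.sqrt 2 * (M + H) / (3 * μ ^ ((3 : ℝ) / 2))
        * ((n : ℝ)⁻¹ * ∑ i, (F (w i) - F xstar) ^ ((3 : ℝ) / 2)) := by
  have hninv : (0:ℝ) ≤ (n:ℝ)⁻¹ := by positivity
  have htay : ∀ i y, |f i y - φ i y| ≤ H / 6 * ‖y - w i‖ ^ 3 := by
    intro i y
    rw [hφ]
    exact taylor_cubic (f i) H hH (hf i) (hLip i) (w i) y
  have hgrad0 : gradient F xstar = 0 := by
    have hloc : IsLocalMin F xstar := Filter.Eventually.of_forall (fun y => hmin y)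
    have h0 : fderiv ℝ F xstar = 0 := hloc.fderiv_eq_zero
    show (InnerProductSpace.toDual ℝ _).symm (fderiv ℝ F xstar) = 0
    rw [h0]
    simp
  have hdist : ∀ i, μ / 2 * ‖w i - xstar‖ ^ 2 ≤ F (w i) - F xstar := by
    intro i
    have h := hsc (w i) xstar
    rw [hgrad0, inner_zero_left] at h
    linarith
  have hμ32 : (0:ℝ) < μ ^ ((3:ℝ)/2) := Real.rpow_pos_of_pos hμ _
  have h232 : (2:ℝ) ^ ((3:ℝ)/2) = 2 * Real.sqrt 2 := by
    rw [show ((3:ℝ)/2) = 1 + 1/2 by norm_num, Real.rpow_add two_pos, Real.rpow_one,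
      ← Real.sqrt_eq_rpow]
  have hcube : ∀ i, ‖xstar - w i‖ ^ 3
      ≤ 2 * Real.sqrt 2 / μ ^ ((3:ℝ)/2) * (F (w i) - F xstar) ^ ((3:ℝ)/2) := by
    intro i
    set r := ‖w i - xstar‖ with hr
    have hrn : ‖xstar - w i‖ = r := norm_sub_rev _ _
    have hr0 : (0:ℝ) ≤ r := norm_nonneg _
    have hΔ : (0:ℝ) ≤ F (w i) - F xstar := sub_nonneg.2 (hmin _)
    have h2 : r ^ 2 ≤ 2 / μ * (F (w i) - F xstar) := by
      have := hdist i
      rw [div_mul_eq_mul_div, le_div_iff₀ hμ]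
      nlinarith
    have e1 : (r ^ 2 : ℝ) ^ ((3:ℝ)/2) = r ^ 3 := by
      rw [← Real.rpow_natCast r 2, ← Real.rpow_mul hr0]
      norm_num
    have mono : (r ^ 2 : ℝ) ^ ((3:ℝ)/2) ≤ (2 / μ * (F (w i) - F xstar)) ^ ((3:ℝ)/2) :=
      Real.rpow_le_rpow (sq_nonneg r) h2 (by norm_num)
    have e2 : (2 / μ * (F (w i) - F xstar)) ^ ((3:ℝ)/2)
        = 2 * Real.sqrt 2 / μ ^ ((3:ℝ)/2) * (F (w i) - F xstar) ^ ((3:ℝ)/2) := by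
      rw [Real.mul_rpow (by positivity) hΔ, Real.div_rpow (by norm_num) hμ.le, h232]
    rw [hrn, ← e1]
    rw [← e2]
    exact mono
  have key : F xplus - F xstar ≤ (M + H) / 6 * ((n:ℝ)⁻¹ * ∑ i, ‖xstar - w i‖ ^ 3) := by
    have s1 : F xplus ≤ (n:ℝ)⁻¹ * ∑ i, (φ i xplus + M / 6 * ‖xplus - w i‖ ^ 3) := by
      rw [hF]
      apply mul_le_mul_of_nonneg_left _ hninv
      apply Finset.sum_le_sum
      intro i _
      have h1 := (abs_le.1 (htay i xplus)).2
      have h3 : H / 6 * ‖xplus - w i‖ ^ 3 ≤ M / 6 * ‖xplus - w i‖ ^ 3 := by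
        apply mul_le_mul_of_nonneg_right _ (by positivity)
        linarith
      linarith
    have s2 := hxplus xstar
    have s3 : (n:ℝ)⁻¹ * ∑ i, (φ i xstar + M / 6 * ‖xstar - w i‖ ^ 3)
        ≤ (n:ℝ)⁻¹ * ∑ i, (f i xstar + (M + H) / 6 * ‖xstar - w i‖ ^ 3) := by
      apply mul_le_mul_of_nonneg_left _ hninv
      apply Finset.sum_le_sum
      intro i _
      have h1 := (abs_le.1 (htay i xstar)).1
      linarith
    have s4 : (n:ℝ)⁻¹ * ∑ i, (f i xstar + (M + H) / 6 * ‖xstar - w i‖ ^ 3)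
        = F xstar + (M + H) / 6 * ((n:ℝ)⁻¹ * ∑ i, ‖xstar - w i‖ ^ 3) := by
      rw [hF, Finset.sum_add_distrib, ← Finset.mul_sum]
      ring
    have := (s1.trans (s2.trans s3)).trans_eq s4
    linarith
  have hMH : (0:ℝ) ≤ (M + H) / 6 := by linarith
  have last : (n:ℝ)⁻¹ * ∑ i, ‖xstar - w i‖ ^ 3
      ≤ 2 * Real.sqrt 2 / μ ^ ((3:ℝ)/2) * ((n:ℝ)⁻¹ * ∑ i, (F (w i) - F xstar) ^ ((3:ℝ)/2)) := by
    have h1 : ∑ i, ‖xstar - w i‖ ^ 3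
        ≤ ∑ i, 2 * Real.sqrt 2 / μ ^ ((3:ℝ)/2) * (F (w i) - F xstar) ^ ((3:ℝ)/2) :=
      Finset.sum_le_sum (fun i _ => hcube i)
    calc (n:ℝ)⁻¹ * ∑ i, ‖xstar - w i‖ ^ 3
        ≤ (n:ℝ)⁻¹ * ∑ i, 2 * Real.sqrt 2 / μ ^ ((3:ℝ)/2) * (F (w i) - F xstar) ^ ((3:ℝ)/2) :=
          mul_le_mul_of_nonneg_left h1 hninv
      _ = 2 * Real.sqrt 2 / μ ^ ((3:ℝ)/2) * ((n:ℝ)⁻¹ * ∑ i, (F (w i) - F xstar) ^ ((3:ℝ)/2)) := by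
          rw [← Finset.mul_sum]
          ring
  have hsum0 : (0:ℝ) ≤ (n:ℝ)⁻¹ * ∑ i, (F (w i) - F xstar) ^ ((3:ℝ)/2) := by
    apply mul_nonneg hninv
    apply Finset.sum_nonneg
    intro i _
    exact Real.rpow_nonneg (sub_nonneg.2 (hmin _)) _
  have final := key.trans (mul_le_mul_of_nonneg_left last hMH)
  have hconst : (M + H) / 6 * (2 * Real.sqrt 2 / μ ^ ((3:ℝ)/2))
      = Real.sqrt 2 * (M + H) / (3 * μ ^ ((3:ℝ)/2)) := by
    field_simp
    ring
  calc F xplus - F xstar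
      ≤ (M + H) / 6 * (2 * Real.sqrt 2 / μ ^ ((3:ℝ)/2)
          * ((n:ℝ)⁻¹ * ∑ i, (F (w i) - F xstar) ^ ((3:ℝ)/2))) := final
    _ = Real.sqrt 2 * (M + H) / (3 * μ ^ ((3:ℝ)/2))
          * ((n:ℝ)⁻¹ * ∑ i, (F (w i) - F xstar) ^ ((3:ℝ)/2)) := by
        rw [← mul_assoc, hconst]
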